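/- Let μ = (μ_1, …, μ_l) be a partition of n with l = l(μ) nonzero parts. Then the weighted sum of all q-rook monoid characters over two-row shapes satisfies Σ_{m=0}^{n} Σ_{k=0}^{⌊m/2⌋} (m−2k+1) · χ^{(m−k,k)}_μ(q) = q^{n−l(μ)} · ∏_{i=1}^{l} ( 3μ_i − 3q^{-1}(μ_i−1) + (μ_i−1)(μ_i−2)(1−q^{-1})^2/2 ). -/

import Mathlib

open Finset

noncomputable section

abbrev FF : Type := RatFunc ℚ

/-- The ring Λ of symmetric functions over ℚ(t), as the polynomial ring in the
algebraically independent power sums `pp 1, pp 2, …`. -/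
abbrev SymF : Type := MvPolynomial ℕ+ FF

/-- The variable t of the ground field ℚ(t). -/
def tv : FF := RatFunc.X

/-- the power sum p_n -/
def pp (n : ℕ+) : SymF := MvPolynomial.X n

/-- q_n(a), defined by Σ_{n≥0} q_n(a) z^n = exp(Σ_{n≥1} ((1-a^n)/n) p_n z^n);
equivalently (taking the logarithmic derivative of the generating function)
by q_0 = 1 and n·q_n = Σ_{k=1}^{n} (1-a^k) p_k q_{n-k}. -/
def qn (a : FF) : ℕ → SymF
  | 0 => 1
  | n + 1 =>
      (((n : FF) + 1)⁻¹) • ∑ k ∈ Finset.range (n + 1),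
        (MvPolynomial.C (1 - a ^ (k + 1))) * pp ⟨k + 1, Nat.succ_pos k⟩ * qn a (n - k)
  termination_by n => n
  decreasing_by omega

/-- q̂_n(a), defined by Σ_{n≥0} q̂_n(a) z^n = exp(Σ_{n≥1} ((1-a^n)/n)(1+p_n) z^n);
equivalently by q̂_0 = 1 and n·q̂_n = Σ_{k=1}^{n} (1-a^k)(1+p_k) q̂_{n-k}. -/
def qhat (a : FF) : ℕ → SymF
  | 0 => 1
  | n + 1 =>
      (((n : FF) + 1)⁻¹) • ∑ k ∈ Finset.range (n + 1),
        (MvPolynomial.C (1 - a ^ (k + 1))) * (1 + pp ⟨k + 1, Nat.succ_pos k⟩) * qhat a (n - k)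
  termination_by n => n
  decreasing_by omega

/-- the number of nonzero parts of a composition -/
def ell {l : ℕ} (mu : Fin l → ℕ) : ℕ := (Finset.univ.filter fun i => mu i ≠ 0).card

/-- q̂_μ(a) = ∏_i q̂_{μ_i}(a). -/
def qhatProd (a : FF) {l : ℕ} (mu : Fin l → ℕ) : SymF := ∏ i, qhat a (mu i)

/-- q_μ(a) = ∏_i q_{μ_i}(a). -/
def qnProd (a : FF) {l : ℕ} (mu : Fin l → ℕ) : SymF := ∏ i, qn a (mu i)

/-- z_λ, where the finitely supported function d records the multiplicities of the parts. -/
def zfac (d : ℕ+ →₀ ℕ) : FF :=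
  ∏ i ∈ d.support, (((i : ℕ) : FF) ^ (d i) * (Nat.factorial (d i) : FF))

/-- The Hall inner product on Λ, determined by ⟨p_λ, p_μ⟩ = δ_{λμ} z_λ. -/
def hall (f g : SymF) : FF :=
  ∑ d ∈ f.support, MvPolynomial.coeff d f * MvPolynomial.coeff d g * zfac d

/-- the complete homogeneous symmetric function h_n, defined by
Σ_{n≥0} h_n z^n = exp(Σ_{n≥1} p_n z^n / n); equivalently by h_0 = 1 and
n·h_n = Σ_{k=1}^{n} p_k h_{n-k} (Newton's identity). -/
def hh : ℕ → SymF
  | 0 => 1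
  | n + 1 =>
      (((n : FF) + 1)⁻¹) • ∑ k ∈ Finset.range (n + 1),
        pp ⟨k + 1, Nat.succ_pos k⟩ * hh (n - k)
  termination_by n => n
  decreasing_by omega

/-- h_k for k ∈ ℤ, with h_k = 0 for k < 0. -/
def hZ (k : ℤ) : SymF := if 0 ≤ k then hh k.toNat else 0

/-- The Schur function s_λ (via the Jacobi–Trudi formula). -/
def schur {r : ℕ} (lam : Fin r → ℕ) : SymF :=
  Matrix.det (Matrix.of fun i j : Fin r => hZ ((lam i : ℤ) + (j : ℤ) - (i : ℤ)))

/-- The variable q of ℚ(q) (the same as tv, renamed for readability). -/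
def qv : FF := RatFunc.X

/-- C(μ;k): compositions τ ⊂ μ with |τ| = k. -/
def Cset {l : ℕ} (mu : Fin l → ℕ) (k : ℕ) : Finset (Fin l → ℕ) :=
  (Finset.Iic mu).filter fun τ => ∑ i, τ i = k

/-- The irreducible character χ^λ_μ(q) of the q-rook monoid algebra R_n(q), via the
Frobenius formula χ^λ_μ(q) = (q^{|μ|}/(q-1)^{l(μ)}) ⟨q̂_μ(q⁻¹), s_λ⟩. -/
def chi {r l : ℕ} (lam : Fin r → ℕ) (mu : Fin l → ℕ) : FF :=
  qv ^ (∑ i, mu i) / (qv - 1) ^ (ell mu) * hall (qhatProd qv⁻¹ mu) (schur lam)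

set_option synthInstance.maxHeartbeats 1000000
set_option maxHeartbeats 1000000

namespace ChiAux

instance : CharZero FF :=
  charZero_of_injective_algebraMap (IsFractionRing.injective (Polynomial ℚ) (RatFunc ℚ))

/-- specialization p_k ↦ 2 (two variables set to 1) -/
def eps : SymF →ₐ[FF] FF := MvPolynomial.aeval (fun _ => 2)

lemma eps_pp (j : ℕ+) : eps (pp j) = 2 := by simp [eps, pp]

lemma eps_C (c : FF) : eps (MvPolynomial.C c) = c := by simp [eps]

lemma cast_add_one_ne (n : ℕ) : ((n : FF) + 1) ≠ 0 := by
  exact_mod_cast Nat.cast_add_one_ne_zero (R := FF) n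

def Ebar (a x : FF) : FF := (1 - a) * (3 * x - 3 * a * (x - 1) + (x - 1) * (x - 2) * (1 - a) ^ 2 / 2)

def Efun (a : FF) : ℕ → FF
  | 0 => 1
  | m + 1 => Ebar a ((m : FF) + 1)

def Sfun (a : FF) (u : ℕ → FF) (M : ℕ) : FF := ∑ j ∈ Finset.range M, (1 - a ^ (M - j)) * u j

lemma eps_qhat_S (a : FF) (M : ℕ) :
    (M : FF) * eps (qhat a M) = 3 * Sfun a (fun j => eps (qhat a j)) M := by
  cases M with
  | zero => simp [Sfun]
  | succ n =>
    have h1 : qhat a (n + 1) = (((n : FF) + 1)⁻¹) • ∑ k ∈ Finset.range (n + 1),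
        (MvPolynomial.C (1 - a ^ (k + 1))) * (1 + pp ⟨k + 1, Nat.succ_pos k⟩) * qhat a (n - k) := by
      rw [qhat]
    rw [h1, map_smul, smul_eq_mul, ← mul_assoc]
    have h2 : ((n + 1 : ℕ) : FF) * ((n : FF) + 1)⁻¹ = 1 := by
      push_cast
      exact mul_inv_cancel₀ (cast_add_one_ne n)
    rw [h2, one_mul, map_sum]
    have h3 : ∀ k ∈ Finset.range (n + 1),
        eps (MvPolynomial.C (1 - a ^ (k + 1)) * (1 + pp ⟨k + 1, Nat.succ_pos k⟩) * qhat a (n - k))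
          = (1 - a ^ (k + 1)) * 3 * eps (qhat a (n - k)) := by
      intro k _
      rw [map_mul, map_mul, map_add, map_one, eps_C]
      erw [eps_pp]
      norm_num
    rw [Finset.sum_congr rfl h3]
    unfold Sfun
    rw [← Finset.sum_range_reflect (fun j => (1 - a ^ (n + 1 - j)) * (fun j => eps (qhat a j)) j) (n + 1),
      Finset.mul_sum]
    apply Finset.sum_congr rfl
    intro k hk
    simp only [Finset.mem_range] at hk
    have e1 : n + 1 - (n + 1 - 1 - k) = k + 1 := by omega
    have e2 : n + 1 - 1 - k = n - k := by omega
    rw [e2]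
    have e3 : n + 1 - (n - k) = k + 1 := by omega
    rw [e3]
    ring

lemma Sfun_tele (a : FF) (u : ℕ → FF) (N : ℕ) :
    Sfun a u (N + 2) = (1 + a) * Sfun a u (N + 1) - a * Sfun a u N + (1 - a) * u (N + 1) := by
  unfold Sfun
  rw [Finset.sum_range_succ, Finset.sum_range_succ (fun j => (1 - a ^ (N + 2 - j)) * u j) N,
    Finset.sum_range_succ (fun j => (1 - a ^ (N + 1 - j)) * u j) N]
  have e1 : N + 2 - (N + 1) = 1 := by omega
  have e2 : N + 2 - N = 2 := by omega
  have e3 : N + 1 - N = 1 := by omega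
  rw [e1, e2, e3]
  have hmain : ∑ j ∈ Finset.range N, (1 - a ^ (N + 2 - j)) * u j
      = ∑ j ∈ Finset.range N, ((1 + a) * ((1 - a ^ (N + 1 - j)) * u j) - a * ((1 - a ^ (N - j)) * u j)) := by
    apply Finset.sum_congr rfl
    intro j hj
    simp only [Finset.mem_range] at hj
    have e4 : N + 2 - j = (N - j) + 2 := by omega
    have e5 : N + 1 - j = (N - j) + 1 := by omega
    rw [e4, e5]
    ring
  rw [hmain, Finset.sum_sub_distrib, ← Finset.mul_sum, ← Finset.mul_sum]
  ring

lemma Efun_rec (a : FF) (N : ℕ) :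
    ((N : FF) + 2) * Efun a (N + 2)
      = (1 + a) * ((N : FF) + 1) * Efun a (N + 1) - a * (N : FF) * Efun a N
        + 3 * (1 - a) * Efun a (N + 1) := by
  cases N with
  | zero => simp only [Efun, Ebar]; push_cast; ring
  | succ K => simp only [Efun, Ebar]; push_cast; ring

lemma eps_qhat (a : FF) (m : ℕ) : eps (qhat a m) = Efun a m := by
  induction m using Nat.strong_induction_on with
  | _ m ih =>
    match m with
    | 0 => show eps (qhat a 0) = 1; rw [qhat]; simp
    | 1 =>
      have h := eps_qhat_S a 1
      simp only [Nat.cast_one, one_mul, Sfun, Finset.sum_range_one] at h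
      have h0 : eps (qhat a 0) = 1 := by rw [qhat]; simp
      rw [h0] at h
      rw [h]
      simp only [Efun, Ebar]
      push_cast
      ring
    | (N + 2) =>
      have hS2 := eps_qhat_S a (N + 2)
      have hS1 := eps_qhat_S a (N + 1)
      have hS0 := eps_qhat_S a N
      have htel := Sfun_tele a (fun j => eps (qhat a j)) N
      have ih1 := ih (N + 1) (by omega)
      have ih0 := ih N (by omega)
      have hrec := Efun_rec a N
      have hne : ((N + 2 : ℕ) : FF) ≠ 0 := Nat.cast_ne_zero.mpr (by omega)
      apply mul_left_cancel₀ hne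
      calc ((N + 2 : ℕ) : FF) * eps (qhat a (N + 2))
          = 3 * Sfun a (fun j => eps (qhat a j)) (N + 2) := hS2
        _ = (1 + a) * (3 * Sfun a (fun j => eps (qhat a j)) (N + 1))
            - a * (3 * Sfun a (fun j => eps (qhat a j)) N)
            + 3 * (1 - a) * eps (qhat a (N + 1)) := by rw [htel]; ring
        _ = (1 + a) * (((N + 1 : ℕ) : FF) * Efun a (N + 1)) - a * ((N : FF) * Efun a N)
            + 3 * (1 - a) * Efun a (N + 1) := by rw [← hS1, ← hS0, ih1, ih0]
        _ = ((N + 2 : ℕ) : FF) * Efun a (N + 2) := by push_cast; linear_combination -hrec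

end ChiAux
namespace ChiAux

/-- Σ_{j≤m} h_j h_{m-j} -/
def Gm (m : ℕ) : SymF := ∑ j ∈ Finset.range (m + 1), hh j * hh (m - j)

/-- sum of multiplicities -/
def csum (d : ℕ+ →₀ ℕ) : ℕ := ∑ i ∈ d.support, d i

/-- weighted degree -/
def wdeg (d : ℕ+ →₀ ℕ) : ℕ := ∑ i ∈ d.support, (i : ℕ) * d i

lemma newton (m : ℕ) :
    (m : FF) • hh m = ∑ k ∈ Finset.range m, pp ⟨k + 1, Nat.succ_pos k⟩ * hh (m - 1 - k) := by
  cases m with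
  | zero => simp
  | succ n =>
    have h1 : hh (n + 1) = (((n : FF) + 1)⁻¹) • ∑ k ∈ Finset.range (n + 1),
        pp ⟨k + 1, Nat.succ_pos k⟩ * hh (n - k) := by rw [hh]
    rw [h1, smul_smul]
    have h2 : ((n + 1 : ℕ) : FF) * ((n : FF) + 1)⁻¹ = 1 := by
      push_cast; exact mul_inv_cancel₀ (cast_add_one_ne n)
    rw [h2, one_smul]
    apply Finset.sum_congr rfl
    intro k hk
    simp only [Finset.mem_range] at hk
    have : n + 1 - 1 - k = n - k := by omega
    rw [this]

lemma triangle {β : Type*} [AddCommMonoid β] (m : ℕ) (F : ℕ → ℕ → β) :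
    ∑ j ∈ Finset.range (m + 1), ∑ k ∈ Finset.range (m - j), F j k
      = ∑ k ∈ Finset.range m, ∑ j ∈ Finset.range (m - k), F j k := by
  have h1 : ∀ j, ∑ k ∈ Finset.range (m - j), F j k
      = ∑ k ∈ Finset.range m, if k < m - j then F j k else 0 := by
    intro j
    rw [← Finset.sum_filter]
    congr 1
    ext k
    simp only [Finset.mem_filter, Finset.mem_range]
    omega
  have h2 : ∀ k, ∑ j ∈ Finset.range (m - k), F j k
      = ∑ j ∈ Finset.range (m + 1), if k < m - j then F j k else 0 := by
    intro k
    rw [← Finset.sum_filter]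
    congr 1
    ext j
    simp only [Finset.mem_filter, Finset.mem_range]
    omega
  simp_rw [h1]
  rw [Finset.sum_comm]
  apply Finset.sum_congr rfl
  intro k _
  exact (h2 k).symm

lemma Gm_newton (m : ℕ) :
    (m : FF) • Gm m = (2 : FF) • ∑ k ∈ Finset.range m, Gm (m - 1 - k) * pp ⟨k + 1, Nat.succ_pos k⟩ := by
  have step1 : (m : FF) • Gm m
      = ∑ j ∈ Finset.range (m + 1), ((j : FF) • hh j) * hh (m - j)
        + ∑ j ∈ Finset.range (m + 1), hh j * (((m - j : ℕ) : FF) • hh (m - j)) := by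
    unfold Gm
    rw [Finset.smul_sum, ← Finset.sum_add_distrib]
    apply Finset.sum_congr rfl
    intro j hj
    simp only [Finset.mem_range] at hj
    have hc : (m : FF) = (j : FF) + ((m - j : ℕ) : FF) := by
      rw [← Nat.cast_add]
      congr 1
      omega
    rw [hc, add_smul, smul_mul_assoc, mul_smul_comm]
  have step2 : ∑ j ∈ Finset.range (m + 1), ((j : FF) • hh j) * hh (m - j)
      = ∑ j ∈ Finset.range (m + 1), hh j * (((m - j : ℕ) : FF) • hh (m - j)) := by
    rw [← Finset.sum_range_reflect (fun j => ((j : FF) • hh j) * hh (m - j)) (m + 1)]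
    apply Finset.sum_congr rfl
    intro j hj
    simp only [Finset.mem_range] at hj
    have e1 : m + 1 - 1 - j = m - j := by omega
    have e2 : m - (m - j) = j := by omega
    rw [e1, e2, mul_comm]
  have step3 : ∀ j, ((m - j : ℕ) : FF) • hh (m - j)
      = ∑ k ∈ Finset.range (m - j), pp ⟨k + 1, Nat.succ_pos k⟩ * hh (m - j - 1 - k) :=
    fun j => newton (m - j)
  rw [step1, step2, ← two_smul FF]
  congr 1
  simp_rw [step3, Finset.mul_sum]
  rw [triangle m (fun j k => hh j * (pp ⟨k + 1, Nat.succ_pos k⟩ * hh (m - j - 1 - k)))]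
  apply Finset.sum_congr rfl
  intro k hk
  simp only [Finset.mem_range] at hk
  have e1 : m - k = (m - 1 - k) + 1 := by omega
  rw [e1]
  unfold Gm
  rw [Finset.sum_mul]
  apply Finset.sum_congr rfl
  intro j hj
  simp only [Finset.mem_range] at hj
  have e2 : m - j - 1 - k = m - 1 - k - j := by omega
  rw [e2]
  ring

end ChiAux
namespace ChiAux

lemma zfac_eq (d : ℕ+ →₀ ℕ) (s : Finset ℕ+) (hs : d.support ⊆ s) :
    zfac d = ∏ i ∈ s, (((i : ℕ) : FF) ^ (d i) * (Nat.factorial (d i) : FF)) := by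
  unfold zfac
  apply Finset.prod_subset hs
  intro i _ hi
  have h0 : d i = 0 := Finsupp.notMem_support_iff.mp hi
  simp [h0]

lemma wdeg_eq (d : ℕ+ →₀ ℕ) (s : Finset ℕ+) (hs : d.support ⊆ s) :
    wdeg d = ∑ i ∈ s, (i : ℕ) * d i := by
  unfold wdeg
  apply Finset.sum_subset hs
  intro i _ hi
  have h0 : d i = 0 := Finsupp.notMem_support_iff.mp hi
  simp [h0]

lemma csum_eq (d : ℕ+ →₀ ℕ) (s : Finset ℕ+) (hs : d.support ⊆ s) :
    csum d = ∑ i ∈ s, d i := by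
  unfold csum
  apply Finset.sum_subset hs
  intro i _ hi
  exact Finsupp.notMem_support_iff.mp hi

lemma sub_single_apply (d : ℕ+ →₀ ℕ) (i j : ℕ+) :
    (d - Finsupp.single i 1 : ℕ+ →₀ ℕ) j = d j - Finsupp.single i 1 j :=
  Finsupp.tsub_apply d (Finsupp.single i 1) j

lemma support_sub_single (d : ℕ+ →₀ ℕ) (i : ℕ+) :
    (d - Finsupp.single i 1).support ⊆ d.support := by
  intro j hj
  rw [Finsupp.mem_support_iff] at hj ⊢
  rw [sub_single_apply] at hj
  omega

lemma wdeg_sub_single (d : ℕ+ →₀ ℕ) (i : ℕ+) (hi : i ∈ d.support) :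
    wdeg d = wdeg (d - Finsupp.single i 1) + (i : ℕ) := by
  have hdi : 1 ≤ d i := Finsupp.mem_support_iff.mp hi |>.bot_lt
  rw [wdeg_eq d d.support (subset_refl _), wdeg_eq _ d.support (support_sub_single d i)]
  rw [← Finset.add_sum_erase _ _ hi, ← Finset.add_sum_erase _ _ hi]
  have hrest : ∑ j ∈ d.support.erase i, (j : ℕ) * (d - Finsupp.single i 1 : ℕ+ →₀ ℕ) j
      = ∑ j ∈ d.support.erase i, (j : ℕ) * d j := by
    apply Finset.sum_congr rfl
    intro j hj
    have hne : j ≠ i := Finset.ne_of_mem_erase hj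
    rw [sub_single_apply, Finsupp.single_apply, if_neg (Ne.symm hne), Nat.sub_zero]
  rw [hrest, sub_single_apply, Finsupp.single_apply, if_pos rfl]
  have h5 : (i : ℕ) * (d i - 1) + (i : ℕ) = (i : ℕ) * d i := by
    rcases Nat.exists_eq_add_of_le hdi with ⟨c, hc⟩
    rw [hc]
    have e : 1 + c - 1 = c := by omega
    rw [e]
    ring
  omega

lemma csum_sub_single (d : ℕ+ →₀ ℕ) (i : ℕ+) (hi : i ∈ d.support) :
    csum d = csum (d - Finsupp.single i 1) + 1 := by
  have hdi : 1 ≤ d i := Finsupp.mem_support_iff.mp hi |>.bot_lt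
  rw [csum_eq d d.support (subset_refl _), csum_eq _ d.support (support_sub_single d i)]
  rw [← Finset.add_sum_erase _ _ hi, ← Finset.add_sum_erase _ _ hi]
  have hrest : ∑ j ∈ d.support.erase i, (d - Finsupp.single i 1 : ℕ+ →₀ ℕ) j
      = ∑ j ∈ d.support.erase i, d j := by
    apply Finset.sum_congr rfl
    intro j hj
    have hne : j ≠ i := Finset.ne_of_mem_erase hj
    rw [sub_single_apply, Finsupp.single_apply, if_neg (Ne.symm hne), Nat.sub_zero]
  rw [hrest, sub_single_apply, Finsupp.single_apply, if_pos rfl]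
  omega

lemma zfac_ne_zero (d : ℕ+ →₀ ℕ) : zfac d ≠ 0 := by
  unfold zfac
  apply Finset.prod_ne_zero_iff.mpr
  intro i _
  apply mul_ne_zero
  · apply pow_ne_zero
    exact_mod_cast Nat.cast_ne_zero.mpr i.2.ne'
  · exact_mod_cast Nat.cast_ne_zero.mpr (Nat.factorial_ne_zero (d i))

lemma zfac_sub_single (d : ℕ+ →₀ ℕ) (i : ℕ+) (hi : i ∈ d.support) :
    zfac d = ((i : ℕ) : FF) * ((d i : ℕ) : FF) * zfac (d - Finsupp.single i 1) := by
  have hdi : 1 ≤ d i := Finsupp.mem_support_iff.mp hi |>.bot_lt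
  rw [zfac_eq d d.support (subset_refl _), zfac_eq _ d.support (support_sub_single d i)]
  rw [← Finset.mul_prod_erase _ _ hi, ← Finset.mul_prod_erase _ _ hi]
  have hrest : ∏ j ∈ d.support.erase i,
        (((j : ℕ) : FF) ^ ((d - Finsupp.single i 1 : ℕ+ →₀ ℕ) j) * (Nat.factorial ((d - Finsupp.single i 1 : ℕ+ →₀ ℕ) j) : FF))
      = ∏ j ∈ d.support.erase i, (((j : ℕ) : FF) ^ (d j) * (Nat.factorial (d j) : FF)) := by
    apply Finset.prod_congr rfl
    intro j hj
    have hne : j ≠ i := Finset.ne_of_mem_erase hj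
    rw [sub_single_apply, Finsupp.single_apply, if_neg (Ne.symm hne), Nat.sub_zero]
  rw [hrest, sub_single_apply, Finsupp.single_apply, if_pos rfl]
  rw [← mul_assoc]
  congr 1
  cases' Nat.exists_eq_add_of_le hdi with c hc
  rw [Nat.add_comm] at hc
  rw [hc, Nat.add_sub_cancel, Nat.factorial_succ, pow_succ]
  push_cast
  ring

lemma wdeg_eq_zero_iff (d : ℕ+ →₀ ℕ) : wdeg d = 0 ↔ d = 0 := by
  constructor
  · intro h
    unfold wdeg at h
    rw [Finset.sum_eq_zero_iff] at h
    ext i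
    simp only [Finsupp.coe_zero, Pi.zero_apply]
    by_contra hne
    have hi : i ∈ d.support := Finsupp.mem_support_iff.mpr hne
    have h3 := h i hi
    have hpos : 0 < (i : ℕ) := i.2
    rcases Nat.mul_eq_zero.mp h3 with h' | h'
    · omega
    · exact hne h'
  · intro h
    subst h
    simp [wdeg]

lemma wdeg_le_of_mem (d : ℕ+ →₀ ℕ) (i : ℕ+) (hi : i ∈ d.support) : (i : ℕ) ≤ wdeg d := by
  have hdi : 1 ≤ d i := Finsupp.mem_support_iff.mp hi |>.bot_lt
  calc (i : ℕ) ≤ (i : ℕ) * d i := Nat.le_mul_of_pos_right _ hdi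
    _ ≤ wdeg d := by
        unfold wdeg
        exact Finset.single_le_sum (f := fun (j : ℕ+) => (j : ℕ) * d j) (fun j _ => Nat.zero_le _) hi

open scoped Classical in
/-- the key arithmetic fact: the range-indexed guarded sum equals wdeg -/
lemma wdeg_range_sum (d : ℕ+ →₀ ℕ) (m : ℕ) (hm : ∀ i ∈ d.support, (i : ℕ) ≤ m) :
    ∑ k ∈ Finset.range m, (if (⟨k + 1, Nat.succ_pos k⟩ : ℕ+) ∈ d.support
        then (k + 1) * d ⟨k + 1, Nat.succ_pos k⟩ else 0) = wdeg d := by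
  rw [← Finset.sum_filter]
  unfold wdeg
  apply Finset.sum_nbij' (i := fun k => (⟨k + 1, Nat.succ_pos k⟩ : ℕ+)) (j := fun i => (i : ℕ) - 1)
  · intro k hk
    simp only [Finset.mem_filter] at hk
    exact hk.2
  · intro i hi
    simp only [Finset.mem_filter, Finset.mem_range]
    have h1 := hm i hi
    have h2 : 0 < (i : ℕ) := i.2
    constructor
    · exact lt_of_lt_of_le (Nat.sub_lt h2 one_pos) h1
    · refine (congrArg (· ∈ d.support) ?_).mpr hi
      apply PNat.coe_injective
      show (i : ℕ) - 1 + 1 = (i : ℕ)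
      exact Nat.sub_add_cancel h2
  · intro k hk
    show k + 1 - 1 = k
    omega
  · intro i hi
    apply PNat.coe_injective
    show (i : ℕ) - 1 + 1 = (i : ℕ)
    exact Nat.sub_add_cancel i.2
  · intro k hk
    rfl

end ChiAux
namespace ChiAux

lemma csum_pos (d : ℕ+ →₀ ℕ) (hd : d ≠ 0) : 0 < csum d := by
  rcases Finsupp.support_nonempty_iff.mpr hd with ⟨i, hi⟩
  have hdi : 1 ≤ d i := Nat.pos_of_ne_zero (Finsupp.mem_support_iff.mp hi)
  calc 0 < d i := hdi
    _ ≤ csum d := Finset.single_le_sum (f := fun (j : ℕ+) => d j) (fun j _ => Nat.zero_le _) hi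

open scoped Classical in
lemma coeff_Gm (m : ℕ) (d : ℕ+ →₀ ℕ) :
    MvPolynomial.coeff d (Gm m)
      = if wdeg d = m then (2 : FF) ^ (csum d) / zfac d else 0 := by
  induction m using Nat.strong_induction_on generalizing d with
  | _ m ih =>
    cases m with
    | zero =>
      have hG : Gm 0 = 1 := by simp [Gm, hh]
      rw [hG, MvPolynomial.coeff_one]
      by_cases hd : d = 0
      · subst hd
        simp [wdeg, csum, zfac]
      · rw [if_neg (fun h => hd h.symm), if_neg (fun h => hd ((wdeg_eq_zero_iff d).mp h))]
    | succ n =>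
      set m := n + 1 with hm
      have hm0 : m ≠ 0 := by omega
      have hmF : (m : FF) ≠ 0 := Nat.cast_ne_zero.mpr hm0
      have hnewton := Gm_newton m
      have hcoeff := congrArg (MvPolynomial.coeff d) hnewton
      rw [MvPolynomial.coeff_smul, MvPolynomial.coeff_smul, MvPolynomial.coeff_sum] at hcoeff
      have hterm : ∀ k ∈ Finset.range m,
          MvPolynomial.coeff d (Gm (m - 1 - k) * pp ⟨k + 1, Nat.succ_pos k⟩)
            = if (⟨k + 1, Nat.succ_pos k⟩ : ℕ+) ∈ d.support
                then MvPolynomial.coeff (d - Finsupp.single ⟨k + 1, Nat.succ_pos k⟩ 1) (Gm (m - 1 - k))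
                else 0 := by
        intro k _
        convert MvPolynomial.coeff_mul_X' d ⟨k + 1, Nat.succ_pos k⟩ (Gm (m - 1 - k))
        all_goals rfl
      rw [Finset.sum_congr rfl hterm] at hcoeff
      -- rewrite each summand using the induction hypothesis
      have hterm2 : ∀ k ∈ Finset.range m,
          (if (⟨k + 1, Nat.succ_pos k⟩ : ℕ+) ∈ d.support
              then MvPolynomial.coeff (d - Finsupp.single ⟨k + 1, Nat.succ_pos k⟩ 1) (Gm (m - 1 - k))
              else 0)
            = if (⟨k + 1, Nat.succ_pos k⟩ : ℕ+) ∈ d.support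
                then (if wdeg (d - Finsupp.single ⟨k + 1, Nat.succ_pos k⟩ 1) = m - 1 - k
                  then (2 : FF) ^ (csum (d - Finsupp.single ⟨k + 1, Nat.succ_pos k⟩ 1))
                    / zfac (d - Finsupp.single ⟨k + 1, Nat.succ_pos k⟩ 1) else 0)
                else 0 := by
        intro k hk
        simp only [Finset.mem_range] at hk
        by_cases hmem : (⟨k + 1, Nat.succ_pos k⟩ : ℕ+) ∈ d.support
        · rw [if_pos hmem, if_pos hmem, ih (m - 1 - k) (by omega)]
        · rw [if_neg hmem, if_neg hmem]
      rw [Finset.sum_congr rfl hterm2] at hcoeff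
      by_cases hw : wdeg d = m
      · rw [if_pos hw]
        -- every active summand has its inner condition true
        have hterm3 : ∀ k ∈ Finset.range m,
            (if (⟨k + 1, Nat.succ_pos k⟩ : ℕ+) ∈ d.support
                then (if wdeg (d - Finsupp.single ⟨k + 1, Nat.succ_pos k⟩ 1) = m - 1 - k
                  then (2 : FF) ^ (csum (d - Finsupp.single ⟨k + 1, Nat.succ_pos k⟩ 1))
                    / zfac (d - Finsupp.single ⟨k + 1, Nat.succ_pos k⟩ 1) else 0)
                else 0)
              = ((2 : FF) ^ (csum d - 1) / zfac d) *
                  (if (⟨k + 1, Nat.succ_pos k⟩ : ℕ+) ∈ d.support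
                    then (((k + 1) * d ⟨k + 1, Nat.succ_pos k⟩ : ℕ) : FF) else 0) := by
          intro k hk
          simp only [Finset.mem_range] at hk
          by_cases hmem : (⟨k + 1, Nat.succ_pos k⟩ : ℕ+) ∈ d.support
          · rw [if_pos hmem, if_pos hmem]
            set i : ℕ+ := ⟨k + 1, Nat.succ_pos k⟩ with hidef
            have hwd := wdeg_sub_single d i hmem
            have hcs := csum_sub_single d i hmem
            have hzf := zfac_sub_single d i hmem
            have hile : (i : ℕ) ≤ wdeg d := wdeg_le_of_mem d i hmem
            have hcond : wdeg (d - Finsupp.single i 1) = m - 1 - k := by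
              have : (i : ℕ) = k + 1 := rfl
              omega
            rw [if_pos hcond]
            have hzne : zfac (d - Finsupp.single i 1) ≠ 0 := zfac_ne_zero _
            have hdine : ((d i : ℕ) : FF) ≠ 0 :=
              Nat.cast_ne_zero.mpr (Finsupp.mem_support_iff.mp hmem)
            have hine : (((i : ℕ) : ℕ) : FF) ≠ 0 := Nat.cast_ne_zero.mpr i.2.ne'
            have hcs' : csum (d - Finsupp.single i 1) = csum d - 1 := by omega
            rw [hcs']
            rw [hzf]
            have hval : (((k + 1) * d i : ℕ) : FF) = ((i : ℕ) : FF) * ((d i : ℕ) : FF) := by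
              push_cast
              have : ((i : ℕ) : FF) = ((k + 1 : ℕ) : FF) := by norm_cast
              rw [this]
              push_cast
              ring
            rw [hval]
            field_simp
          · rw [if_neg hmem, if_neg hmem, mul_zero]
        rw [Finset.sum_congr rfl hterm3, ← Finset.mul_sum] at hcoeff
        -- the guarded sum is wdeg d = m
        have hball : ∀ i ∈ d.support, (i : ℕ) ≤ m := fun i hi => hw ▸ wdeg_le_of_mem d i hi
        have harith := wdeg_range_sum d m hball
        have hcast : ∑ k ∈ Finset.range m,
            (if (⟨k + 1, Nat.succ_pos k⟩ : ℕ+) ∈ d.support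
              then (((k + 1) * d ⟨k + 1, Nat.succ_pos k⟩ : ℕ) : FF) else 0)
            = ((wdeg d : ℕ) : FF) := by
          rw [← harith]
          rw [Nat.cast_sum]
          apply Finset.sum_congr rfl
          intro k _
          split <;> simp
        rw [hcast, hw] at hcoeff
        -- hcoeff : (m:FF) * coeff = 2 * (2^(csum d -1)/zfac d * m)
        have hd0 : d ≠ 0 := by
          intro h
          rw [h] at hw
          simp [wdeg] at hw
        have hcp : 0 < csum d := csum_pos d hd0
        have h2p : (2 : FF) * (2 : FF) ^ (csum d - 1) = (2 : FF) ^ (csum d) := by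
          cases' Nat.exists_eq_add_of_le hcp with c hc
          rw [Nat.add_comm] at hc
          rw [hc, Nat.add_sub_cancel, pow_succ]
          ring
        apply mul_left_cancel₀ hmF
        have hco' : (m : FF) * MvPolynomial.coeff d (Gm m)
            = 2 * ((2 : FF) ^ (csum d - 1) / zfac d * (m : FF)) := by
          rw [← smul_eq_mul, hcoeff, smul_eq_mul]
        rw [hco', ← h2p]
        ring
      · rw [if_neg hw]
        have hterm4 : ∀ k ∈ Finset.range m,
            (if (⟨k + 1, Nat.succ_pos k⟩ : ℕ+) ∈ d.support
                then (if wdeg (d - Finsupp.single ⟨k + 1, Nat.succ_pos k⟩ 1) = m - 1 - k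
                  then (2 : FF) ^ (csum (d - Finsupp.single ⟨k + 1, Nat.succ_pos k⟩ 1))
                    / zfac (d - Finsupp.single ⟨k + 1, Nat.succ_pos k⟩ 1) else 0)
                else 0) = 0 := by
          intro k hk
          simp only [Finset.mem_range] at hk
          by_cases hmem : (⟨k + 1, Nat.succ_pos k⟩ : ℕ+) ∈ d.support
          · rw [if_pos hmem]
            set i : ℕ+ := ⟨k + 1, Nat.succ_pos k⟩ with hidef
            have hwd := wdeg_sub_single d i hmem
            have hile : (i : ℕ) ≤ wdeg d := wdeg_le_of_mem d i hmem
            have hcond : ¬ (wdeg (d - Finsupp.single i 1) = m - 1 - k) := by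
              have : (i : ℕ) = k + 1 := rfl
              omega
            rw [if_neg hcond]
          · rw [if_neg hmem]
        rw [Finset.sum_congr rfl hterm4] at hcoeff
        simp only [Finset.sum_const_zero, smul_zero, smul_eq_mul, mul_zero] at hcoeff
        rcases mul_eq_zero.mp hcoeff with h | h
        · exact absurd h hmF
        · exact h

end ChiAux
namespace ChiAux

lemma hall_sum_right {ι : Type*} (f : SymF) (s : Finset ι) (g : ι → SymF) :
    hall f (∑ i ∈ s, g i) = ∑ i ∈ s, hall f (g i) := by
  unfold hall
  simp only [MvPolynomial.coeff_sum, Finset.mul_sum, Finset.sum_mul]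
  exact Finset.sum_comm

lemma hall_C_mul (f : SymF) (c : FF) (g : SymF) :
    hall f (MvPolynomial.C c * g) = c * hall f g := by
  unfold hall
  rw [Finset.mul_sum]
  apply Finset.sum_congr rfl
  intro d _
  rw [MvPolynomial.coeff_C_mul]
  ring

lemma eps_eq (f : SymF) :
    eps f = ∑ d ∈ f.support, MvPolynomial.coeff d f * (2 : FF) ^ (csum d) := by
  unfold eps
  rw [MvPolynomial.aeval_def, MvPolynomial.eval₂_eq]
  apply Finset.sum_congr rfl
  intro d _
  rw [Finset.prod_pow_eq_pow_sum]
  rfl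

lemma hall_Gbig (n : ℕ) (f : SymF) (hf : ∀ d ∈ f.support, wdeg d ≤ n) :
    hall f (∑ m ∈ Finset.range (n + 1), Gm m) = eps f := by
  unfold hall
  rw [eps_eq]
  apply Finset.sum_congr rfl
  intro d hd
  have hc : MvPolynomial.coeff d (∑ m ∈ Finset.range (n + 1), Gm m)
      = (2 : FF) ^ (csum d) / zfac d := by
    rw [MvPolynomial.coeff_sum]
    rw [Finset.sum_congr rfl (fun m _ => coeff_Gm m d)]
    rw [Finset.sum_ite_eq (Finset.range (n + 1)) (wdeg d)
      (fun _ => (2 : FF) ^ (csum d) / zfac d)]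
    rw [if_pos (Finset.mem_range.mpr (Nat.lt_succ_of_le (hf d hd)))]
  rw [hc]
  have hz : zfac d ≠ 0 := zfac_ne_zero d
  field_simp

lemma wdeg_add (d e : ℕ+ →₀ ℕ) : wdeg (d + e) = wdeg d + wdeg e := by
  show (d + e).sum (fun i c => (i : ℕ) * c) = _
  rw [Finsupp.sum_add_index' (fun a => mul_zero _) (fun a b c => mul_add _ _ _)]
  rfl

lemma wdeg_support_mul {p q : SymF} {b c : ℕ}
    (hp : ∀ d ∈ p.support, wdeg d ≤ b) (hq : ∀ d ∈ q.support, wdeg d ≤ c) :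
    ∀ d ∈ (p * q).support, wdeg d ≤ b + c := by
  intro d hd
  have hmem := MvPolynomial.support_mul p q hd
  rw [Finset.mem_add] at hmem
  obtain ⟨x, hx, y, hy, rfl⟩ := hmem
  rw [wdeg_add]
  exact add_le_add (hp x hx) (hq y hy)

lemma wdeg_support_one : ∀ d ∈ (1 : SymF).support, wdeg d = 0 := by
  intro d hd
  rw [MvPolynomial.mem_support_iff, MvPolynomial.coeff_one] at hd
  by_cases h : (0 : ℕ+ →₀ ℕ) = d
  · rw [← h]
    simp [wdeg]
  · rw [if_neg h] at hd
    exact absurd rfl hd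

lemma wdeg_support_C (c : FF) : ∀ d ∈ (MvPolynomial.C c : SymF).support, wdeg d = 0 := by
  intro d hd
  rw [MvPolynomial.mem_support_iff, MvPolynomial.coeff_C] at hd
  by_cases h : (0 : ℕ+ →₀ ℕ) = d
  · rw [← h]
    simp [wdeg]
  · rw [if_neg h] at hd
    exact absurd rfl hd

lemma wdeg_single_one (j : ℕ+) : wdeg (Finsupp.single j 1) = (j : ℕ) := by
  unfold wdeg
  rw [Finsupp.support_single_ne_zero j one_ne_zero]
  simp

lemma wdeg_support_one_add_pp (j : ℕ+) :
    ∀ d ∈ ((1 : SymF) + pp j).support, wdeg d ≤ (j : ℕ) := by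
  intro d hd
  have h1 := MvPolynomial.support_add hd
  rw [Finset.mem_union] at h1
  rcases h1 with h | h
  · rw [wdeg_support_one d h]
    exact Nat.zero_le _
  · unfold pp at h
    rw [MvPolynomial.support_X, Finset.mem_singleton] at h
    rw [h, wdeg_single_one]

lemma qhat_wdeg (a : FF) (m : ℕ) : ∀ d ∈ (qhat a m).support, wdeg d ≤ m := by
  induction m using Nat.strong_induction_on with
  | _ m ih =>
    cases m with
    | zero =>
      intro d hd
      rw [show qhat a 0 = 1 from by rw [qhat]] at hd
      rw [wdeg_support_one d hd]
    | succ n =>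
      intro d hd
      rw [show qhat a (n + 1) = (((n : FF) + 1)⁻¹) • ∑ k ∈ Finset.range (n + 1),
          (MvPolynomial.C (1 - a ^ (k + 1))) * (1 + pp ⟨k + 1, Nat.succ_pos k⟩) * qhat a (n - k)
        from by rw [qhat]] at hd
      have hd2 := MvPolynomial.support_smul hd
      have hd3 := MvPolynomial.support_sum hd2
      rw [Finset.mem_biUnion] at hd3
      obtain ⟨k, hk, hd4⟩ := hd3
      simp only [Finset.mem_range] at hk
      have hCb : ∀ e ∈ (MvPolynomial.C (1 - a ^ (k + 1)) : SymF).support, wdeg e ≤ 0 :=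
        fun e he => le_of_eq (wdeg_support_C _ e he)
      have h1 : ∀ e ∈ ((MvPolynomial.C (1 - a ^ (k + 1)) : SymF)
          * (1 + pp ⟨k + 1, Nat.succ_pos k⟩)).support, wdeg e ≤ 0 + (k + 1) :=
        wdeg_support_mul hCb (wdeg_support_one_add_pp ⟨k + 1, Nat.succ_pos k⟩)
      have h2 : ∀ e ∈ ((MvPolynomial.C (1 - a ^ (k + 1)) : SymF)
          * (1 + pp ⟨k + 1, Nat.succ_pos k⟩) * qhat a (n - k)).support,
          wdeg e ≤ (0 + (k + 1)) + (n - k) :=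
        wdeg_support_mul h1 (ih (n - k) (by omega))
      have := h2 d hd4
      omega

lemma prod_wdeg {ι : Type*} (s : Finset ι) (f : ι → SymF) (b : ι → ℕ)
    (h : ∀ i ∈ s, ∀ d ∈ (f i).support, wdeg d ≤ b i) :
    ∀ d ∈ (∏ i ∈ s, f i).support, wdeg d ≤ ∑ i ∈ s, b i := by
  induction s using Finset.cons_induction with
  | empty =>
    intro d hd
    rw [Finset.prod_empty] at hd
    rw [Finset.sum_empty, wdeg_support_one d hd]
  | cons i s his ih =>
    rw [Finset.prod_cons, Finset.sum_cons]
    exact wdeg_support_mul (h i (Finset.mem_cons_self i s))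
      (ih (fun j hj => h j (Finset.mem_cons_of_mem hj)))

lemma qhatProd_wdeg (a : FF) {l : ℕ} (mu : Fin l → ℕ) :
    ∀ d ∈ (qhatProd a mu).support, wdeg d ≤ ∑ i, mu i := by
  unfold qhatProd
  exact prod_wdeg Finset.univ _ mu (fun i _ => qhat_wdeg a (mu i))

end ChiAux
namespace ChiAux

lemma hZ_natCast (n : ℕ) : hZ (n : ℤ) = hh n := by
  simp [hZ]

lemma hZ_neg_one : hZ (-1) = 0 := by
  simp [hZ]

lemma schur_two_row (p q : ℕ) :
    schur ![p, q] = hh p * hh q - hh (p + 1) * hZ ((q : ℤ) - 1) := by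
  unfold schur
  rw [Matrix.det_fin_two]
  simp only [Matrix.of_apply, Matrix.cons_val', Matrix.cons_val_zero, Matrix.cons_val_one,
    Matrix.head_cons, Matrix.empty_val', Matrix.cons_val_fin_one, Matrix.head_fin_const]
  norm_num
  rw [show ((p : ℤ) + 1) = ((p + 1 : ℕ) : ℤ) from by push_cast; ring]
  rw [hZ_natCast, hZ_natCast, hZ_natCast]

end ChiAux
namespace ChiAux

lemma Gm_split (m : ℕ) (K : ℕ) (hKm : K ≤ m) :
    Gm m = (∑ j ∈ Finset.range (K + 1), hh j * hh (m - j))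
      + ∑ j ∈ Finset.range (m - K), hh j * hh (m - j) := by
  have h1 : (∑ j ∈ Finset.Ico 0 (K + 1), hh j * hh (m - j))
      + ∑ j ∈ Finset.Ico (K + 1) (m + 1), hh j * hh (m - j)
      = ∑ j ∈ Finset.Ico 0 (m + 1), hh j * hh (m - j) :=
    Finset.sum_Ico_consecutive _ (Nat.zero_le (K + 1)) (by omega)
  rw [← Finset.range_eq_Ico, ← Finset.range_eq_Ico] at h1
  have h2 : ∑ j ∈ Finset.Ico (K + 1) (m + 1), hh j * hh (m - j)
      = ∑ i ∈ Finset.range (m - K), hh (K + 1 + i) * hh (m - (K + 1 + i)) := by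
    rw [Finset.sum_Ico_eq_sum_range]
    rw [show m + 1 - (K + 1) = m - K from by omega]
  have h3 : ∑ i ∈ Finset.range (m - K), hh (K + 1 + i) * hh (m - (K + 1 + i))
      = ∑ i ∈ Finset.range (m - K), hh i * hh (m - i) := by
    rw [← Finset.sum_range_reflect (fun i => hh (K + 1 + i) * hh (m - (K + 1 + i))) (m - K)]
    apply Finset.sum_congr rfl
    intro i hi
    simp only [Finset.mem_range] at hi
    have e1 : K + 1 + (m - K - 1 - i) = m - i := by omega
    have e2 : m - (m - i) = i := by omega
    rw [e1, e2]
    ring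
  unfold Gm
  rw [← h1, h2, h3]

lemma lemA (m : ℕ) :
    ∑ k ∈ Finset.range (m / 2 + 1), ((m - 2 * k + 1 : ℕ) : SymF) * schur ![m - k, k]
      = Gm m := by
  set K := m / 2 with hK
  have hKm : K ≤ m := Nat.div_le_self m 2
  have hs : ∀ k ∈ Finset.range (K + 1), ((m - 2 * k + 1 : ℕ) : SymF) * schur ![m - k, k]
      = ((m - 2 * k + 1 : ℕ) : SymF) * (hh k * hh (m - k))
        - ((m - 2 * k + 1 : ℕ) : SymF) * (hh (m - k + 1) * hZ ((k : ℤ) - 1)) := by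
    intro k _
    rw [schur_two_row (m - k) k]
    ring
  rw [Finset.sum_congr rfl hs, Finset.sum_sub_distrib]
  have hB : ∑ k ∈ Finset.range (K + 1),
      ((m - 2 * k + 1 : ℕ) : SymF) * (hh (m - k + 1) * hZ ((k : ℤ) - 1))
      = ∑ k ∈ Finset.range K, ((m - 2 * (k + 1) + 1 : ℕ) : SymF) * (hh k * hh (m - k)) := by
    rw [Finset.sum_range_succ' (fun k =>
      ((m - 2 * k + 1 : ℕ) : SymF) * (hh (m - k + 1) * hZ ((k : ℤ) - 1))) K]
    have hf0 : ((m - 2 * 0 + 1 : ℕ) : SymF) * (hh (m - 0 + 1) * hZ (((0 : ℕ) : ℤ) - 1)) = 0 := by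
      norm_num [hZ_neg_one]
    rw [hf0, add_zero]
    apply Finset.sum_congr rfl
    intro k hk
    simp only [Finset.mem_range] at hk
    have h2k : 2 * (k + 1) ≤ m := by omega
    have e1 : m - (k + 1) + 1 = m - k := by omega
    rw [e1]
    rw [show (((k + 1 : ℕ) : ℤ) - 1) = ((k : ℕ) : ℤ) from by push_cast; ring]
    rw [hZ_natCast]
    ring
  rw [hB, Finset.sum_range_succ]
  have hcomb : ∑ k ∈ Finset.range K, ((m - 2 * k + 1 : ℕ) : SymF) * (hh k * hh (m - k))
      - ∑ k ∈ Finset.range K, ((m - 2 * (k + 1) + 1 : ℕ) : SymF) * (hh k * hh (m - k))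
      = 2 * ∑ k ∈ Finset.range K, hh k * hh (m - k) := by
    rw [← Finset.sum_sub_distrib, Finset.mul_sum]
    apply Finset.sum_congr rfl
    intro k hk
    simp only [Finset.mem_range] at hk
    have h2k : 2 * (k + 1) ≤ m := by omega
    have hnat : (m - 2 * k + 1 : ℕ) = (m - 2 * (k + 1) + 1) + 2 := by omega
    rw [hnat]
    push_cast
    ring
  rw [Gm_split m K hKm, Finset.sum_range_succ]
  rcases Nat.even_or_odd m with ⟨t, ht⟩ | ⟨t, ht⟩
  · have hKt : K = t := by omega
    have hmK : m - K = K := by omega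
    have hcK : (m - 2 * K + 1 : ℕ) = 1 := by omega
    rw [hmK, hcK, Nat.cast_one]
    linear_combination hcomb
  · have hKt : K = t := by omega
    have hmK : m - K = K + 1 := by omega
    have hcK : (m - 2 * K + 1 : ℕ) = 2 := by omega
    rw [hmK, hcK, Finset.sum_range_succ]
    rw [show m - K = K + 1 from hmK]
    rw [show ((2 : ℕ) : SymF) = 2 from by norm_num]
    linear_combination hcomb

end ChiAux

open ChiAux in
/-- Theorem 3.13 (3.28), weighted sum of the two-row characters: for a partition
μ = (μ_1,…,μ_l) ⊢ n with l nonzero parts,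
Σ_{m=0}^{n} Σ_{k=0}^{⌊m/2⌋} (m-2k+1) χ^{(m-k,k)}_μ(q)
  = q^{n-l}·∏_{i=1}^{l} (3μ_i - 3q⁻¹(μ_i-1) + (μ_i-1)(μ_i-2)(1-q⁻¹)²/2). -/
theorem chi_two_row_sum (l n : ℕ) (mu : Fin l → ℕ)
    (hmu_anti : ∀ i j : Fin l, i ≤ j → mu j ≤ mu i) (hmu_pos : ∀ i, 0 < mu i)
    (hmu_sum : ∑ i, mu i = n) :
    ∑ m ∈ Finset.range (n + 1), ∑ k ∈ Finset.range (m / 2 + 1),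
        ((m - 2 * k + 1 : ℕ) : FF) * chi (![m - k, k]) mu =
      qv ^ (n - l) *
        ∏ i : Fin l,
          (3 * (mu i : FF) - 3 * qv⁻¹ * ((mu i : FF) - 1) +
            ((mu i : FF) - 1) * ((mu i : FF) - 2) * (1 - qv⁻¹) ^ 2 / 2) := by
  have hq0 : qv ≠ 0 := RatFunc.X_ne_zero
  have hq1 : qv - 1 ≠ 0 := by
    rw [sub_ne_zero]
    intro h
    have hinj : Function.Injective (algebraMap (Polynomial ℚ) (RatFunc ℚ)) :=
      IsFractionRing.injective _ _
    have h2 : (Polynomial.X : Polynomial ℚ) = 1 := by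
      apply hinj
      rw [RatFunc.algebraMap_X, map_one]
      exact h
    have h3 := Polynomial.natDegree_X (R := ℚ)
    rw [h2, Polynomial.natDegree_one] at h3
    exact absurd h3 one_ne_zero.symm
  have hell : ell mu = l := by
    unfold ell
    rw [Finset.filter_true_of_mem (fun i _ => (hmu_pos i).ne')]
    simp
  have hln : l ≤ n := by
    rw [← hmu_sum]
    calc l = ∑ _i : Fin l, 1 := by simp
      _ ≤ ∑ i, mu i := Finset.sum_le_sum (fun i _ => hmu_pos i)
  set f := qhatProd qv⁻¹ mu with hfdef
  have hsupp : ∀ d ∈ f.support, ChiAux.wdeg d ≤ n := by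
    intro d hd
    have h := ChiAux.qhatProd_wdeg qv⁻¹ mu d hd
    rw [hmu_sum] at h
    exact h
  have h1 : ∀ m k : ℕ, ((m - 2 * k + 1 : ℕ) : FF) * chi ![m - k, k] mu
      = qv ^ n / (qv - 1) ^ l
        * hall f (MvPolynomial.C ((m - 2 * k + 1 : ℕ) : FF) * schur ![m - k, k]) := by
    intro m k
    unfold chi
    rw [hmu_sum, hell, ChiAux.hall_C_mul]
    ring
  calc ∑ m ∈ Finset.range (n + 1), ∑ k ∈ Finset.range (m / 2 + 1),
        ((m - 2 * k + 1 : ℕ) : FF) * chi (![m - k, k]) mu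
      = ∑ m ∈ Finset.range (n + 1), ∑ k ∈ Finset.range (m / 2 + 1),
          qv ^ n / (qv - 1) ^ l
            * hall f (MvPolynomial.C ((m - 2 * k + 1 : ℕ) : FF) * schur ![m - k, k]) := by
        apply Finset.sum_congr rfl
        intro m _
        apply Finset.sum_congr rfl
        intro k _
        exact h1 m k
    _ = qv ^ n / (qv - 1) ^ l * ∑ m ∈ Finset.range (n + 1),
          hall f (∑ k ∈ Finset.range (m / 2 + 1),
            MvPolynomial.C ((m - 2 * k + 1 : ℕ) : FF) * schur ![m - k, k]) := by
        rw [Finset.mul_sum]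
        apply Finset.sum_congr rfl
        intro m _
        rw [ChiAux.hall_sum_right, Finset.mul_sum]
    _ = qv ^ n / (qv - 1) ^ l * ∑ m ∈ Finset.range (n + 1), hall f (Gm m) := by
        congr 1
        apply Finset.sum_congr rfl
        intro m _
        congr 1
        rw [← ChiAux.lemA m]
        apply Finset.sum_congr rfl
        intro k _
        congr 1
    _ = qv ^ n / (qv - 1) ^ l * ChiAux.eps f := by
        rw [← ChiAux.hall_sum_right, ChiAux.hall_Gbig n f hsupp]
    _ = qv ^ n / (qv - 1) ^ l * ∏ i, ChiAux.Efun qv⁻¹ (mu i) := by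
        rw [hfdef]
        unfold qhatProd
        rw [map_prod]
        congr 1
        apply Finset.prod_congr rfl
        intro i _
        exact ChiAux.eps_qhat qv⁻¹ (mu i)
    _ = qv ^ (n - l) *
        ∏ i : Fin l,
          (3 * (mu i : FF) - 3 * qv⁻¹ * ((mu i : FF) - 1) +
            ((mu i : FF) - 1) * ((mu i : FF) - 2) * (1 - qv⁻¹) ^ 2 / 2) := by
        have hEi : ∀ i ∈ (Finset.univ : Finset (Fin l)), ChiAux.Efun qv⁻¹ (mu i)
            = (1 - qv⁻¹) * (3 * (mu i : FF) - 3 * qv⁻¹ * ((mu i : FF) - 1) +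
              ((mu i : FF) - 1) * ((mu i : FF) - 2) * (1 - qv⁻¹) ^ 2 / 2) := by
          intro i _
          rcases Nat.exists_eq_succ_of_ne_zero (hmu_pos i).ne' with ⟨t, ht⟩
          rw [ht]
          show ChiAux.Ebar qv⁻¹ ((t : FF) + 1) = _
          unfold ChiAux.Ebar
          push_cast
          ring
        rw [Finset.prod_congr rfl hEi, Finset.prod_mul_distrib, Finset.prod_const,
          Finset.card_univ, Fintype.card_fin]
        have hkey : qv ^ n / (qv - 1) ^ l * (1 - qv⁻¹) ^ l = qv ^ (n - l) := by
          have h1q : (1 - qv⁻¹) = (qv - 1) / qv := by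
            field_simp
          have hqpow : qv ^ n = qv ^ (n - l) * qv ^ l := by
            rw [← pow_add]
            congr 1
            omega
          rw [h1q, div_pow, hqpow]
          field_simp
        rw [← mul_assoc, hkey]

end
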